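/- Existence and uniqueness of the discrete state vector (Corollary 4.2): assume in addition that Γ_{lα} > 0 for at least one pair (l,α) with α ∈ 𝒜(Ê_{lh}), and that the graph with vertex set 𝒜(Q_h) and edge set consisting of all pairs {α, α+eᵢ} with α ∈ 𝒜(Q_h⁺), or α ∈ 𝒜(S_h) ∩ (𝒜(Q_h^{(i)}) ∖ 𝒜(Q_h⁺)), is connected. Then there exists exactly one discrete state vector, i.e. exactly one grid function u : 𝒜(Q_h) → ℝ satisfying the discrete variational identity for all grid test functions η. -/

import Mathlib

open MeasureTheory Finset

lemma aux_exists_unique {κ : Type*} [DecidableEq κ] (A : Finset κ)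
    (B : (κ → ℝ) → (κ → ℝ) → ℝ) (L : (κ → ℝ) → ℝ)
    (Bsym : ∀ u v, B u v = B v u)
    (Badd2 : ∀ u x y, B u (x + y) = B u x + B u y)
    (Bsmul2 : ∀ u (c : ℝ) x, B u (c • x) = c * B u x)
    (Bcongr2 : ∀ u x y, (∀ β ∈ A, x β = y β) → B u x = B u y)
    (Lcongr : ∀ x y, (∀ β ∈ A, x β = y β) → L x = L y)
    (Ladd : ∀ x y, L (x + y) = L x + L y)
    (Lsmul : ∀ (c : ℝ) x, L (c • x) = c * L x)
    (Bker : ∀ u, (∀ β ∉ A, u β = 0) → B u u = 0 → u = 0) :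
    ∃! u : κ → ℝ, (∀ β ∉ A, u β = 0) ∧ ∀ x, B u x = L x := by
  classical
  have Bzero2 : ∀ u, B u 0 = 0 := fun u => by
    have h := Bsmul2 u 0 0; simpa using h
  have Badd1 : ∀ x y u, B (x + y) u = B x u + B y u := fun x y u => by
    rw [Bsym, Badd2, Bsym u x, Bsym u y]
  have Bsmul1 : ∀ (c : ℝ) x u, B (c • x) u = c * B x u := fun c x u => by
    rw [Bsym, Bsmul2, Bsym u x]
  have Bsum2 : ∀ u (s : Finset κ) (f : κ → (κ → ℝ)),
      B u (∑ β ∈ s, f β) = ∑ β ∈ s, B u (f β) := by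
    intro u s f
    induction s using Finset.induction_on with
    | empty => simpa using Bzero2 u
    | insert _ _ hx ih => rw [Finset.sum_insert hx, Finset.sum_insert hx, Badd2, ih]
  have Lzero : L 0 = 0 := by have h := Lsmul 0 0; simpa using h
  have Lsum : ∀ (s : Finset κ) (f : κ → (κ → ℝ)),
      L (∑ β ∈ s, f β) = ∑ β ∈ s, L (f β) := by
    intro s f
    induction s using Finset.induction_on with
    | empty => simpa using Lzero
    | insert _ _ hx ih => rw [Finset.sum_insert hx, Finset.sum_insert hx, Ladd, ih]
  set δ : κ → (κ → ℝ) := fun β γ => if γ = β then 1 else 0 with hδ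
  have hP : ∀ (x : κ → ℝ) (γ : κ), (∑ β ∈ A, x β • δ β) γ = if γ ∈ A then x γ else 0 := by
    intro x γ
    simp only [Finset.sum_apply, Pi.smul_apply, smul_eq_mul, hδ, mul_ite, mul_one, mul_zero]
    exact Finset.sum_ite_eq A γ x
  set ext : (({β // β ∈ A}) → ℝ) → (κ → ℝ) :=
    fun f γ => if hγ : γ ∈ A then f ⟨γ, hγ⟩ else 0 with hext
  have ext_add : ∀ f g, ext (f + g) = ext f + ext g := by
    intro f g; funext γ; simp only [hext, Pi.add_apply]; split <;> simp
  have ext_smul : ∀ (c : ℝ) f, ext (c • f) = c • ext f := by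
    intro c f; funext γ; simp only [hext, Pi.smul_apply, smul_eq_mul]; split <;> simp
  let T : (({β // β ∈ A}) → ℝ) →ₗ[ℝ] (({β // β ∈ A}) → ℝ) :=
    { toFun := fun f β => B (ext f) (δ (β : κ))
      map_add' := by
        intro f g; funext β
        show B (ext (f + g)) (δ (β : κ)) = B (ext f) (δ (β : κ)) + B (ext g) (δ (β : κ))
        rw [ext_add, Badd1]
      map_smul' := by
        intro c f; funext β
        show B (ext (c • f)) (δ (β : κ)) = c * B (ext f) (δ (β : κ))
        rw [ext_smul, Bsmul1] }
  have extsupp : ∀ f, ∀ β ∉ A, ext f β = 0 := by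
    intro f β hβ; simp only [hext]; rw [dif_neg hβ]
  have hBself : ∀ (w : κ → ℝ), (∀ β ∉ A, w β = 0) → (∀ β ∈ A, B w (δ β) = 0) → B w w = 0 := by
    intro w hw h0
    have h1 : B w w = B w (∑ β ∈ A, w β • δ β) := by
      apply Bcongr2
      intro β hβ
      rw [hP]; rw [if_pos hβ]
    rw [h1, Bsum2]
    apply Finset.sum_eq_zero
    intro β hβ
    rw [Bsmul2, h0 β hβ, mul_zero]
  have hinj : Function.Injective T := by
    intro f g hfg
    have hT0 : T (f - g) = 0 := by rw [map_sub, hfg, sub_self]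
    have hext0 : ext (f - g) = 0 := by
      apply Bker _ (extsupp _)
      apply hBself _ (extsupp _)
      intro β hβ
      have := congrFun hT0 ⟨β, hβ⟩
      exact this
    have : f - g = 0 := by
      funext β
      have := congrFun hext0 (β : κ)
      simpa only [hext, dif_pos β.2, Pi.zero_apply] using this
    exact sub_eq_zero.mp this
  have hsurj : Function.Surjective T := LinearMap.injective_iff_surjective.mp hinj
  obtain ⟨u₀, hu₀⟩ := hsurj (fun β => L (δ (β : κ)))
  have hBδ : ∀ β ∈ A, B (ext u₀) (δ β) = L (δ β) := by
    intro β hβ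
    exact congrFun hu₀ ⟨β, hβ⟩
  have hmain : ∀ x, B (ext u₀) x = L x := by
    intro x
    have h1 : B (ext u₀) x = B (ext u₀) (∑ β ∈ A, x β • δ β) := by
      apply Bcongr2; intro β hβ; rw [hP, if_pos hβ]
    have h2 : L x = L (∑ β ∈ A, x β • δ β) := by
      apply Lcongr; intro β hβ; rw [hP, if_pos hβ]
    rw [h1, h2, Bsum2, Lsum]
    apply Finset.sum_congr rfl
    intro β hβ
    rw [Bsmul2, Lsmul, hBδ β hβ]
  refine ⟨ext u₀, ⟨extsupp u₀, hmain⟩, ?_⟩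
  rintro v ⟨hv0, hvx⟩
  have hdsupp : ∀ β ∉ A, (v - ext u₀) β = 0 := by
    intro β hβ; simp [hv0 β hβ, extsupp u₀ β hβ]
  have hdiff : ∀ x, B (v - ext u₀) x = 0 := by
    intro x
    have hrw : v - ext u₀ = v + (-1 : ℝ) • ext u₀ := by
      funext γ; simp; ring
    rw [hrw, Badd1, Bsmul1, hvx x, hmain x]; ring
  have : v - ext u₀ = 0 := Bker _ hdsupp (hdiff _)
  exact sub_eq_zero.mp this

/-- The natural corner `x_α = hα` of the cell `C_h^α`, as a point of `ℝⁿ`. -/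
noncomputable def gridCorner (n : ℕ) (h : ℝ) (α : Fin n → ℤ) : EuclideanSpace ℝ (Fin n) :=
  WithLp.toLp 2 (fun i => (α i : ℝ) * h)

/-- The closed cell `C_h^α = ∏ᵢ [kᵢh, (kᵢ+1)h]`. -/
def gridCell (n : ℕ) (h : ℝ) (α : Fin n → ℤ) : Set (EuclideanSpace ℝ (Fin n)) :=
  {x | ∀ i, (α i : ℝ) * h ≤ x i ∧ x i ≤ ((α i : ℝ) + 1) * h}

/-- Forward difference quotient `u_{α xᵢ} = (u_{α+eᵢ} - u_α)/h` of a grid function. -/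
noncomputable def gridFwdDiff (n : ℕ) (h : ℝ) (u : (Fin n → ℤ) → ℝ) (α : Fin n → ℤ)
    (i : Fin n) : ℝ :=
  (u (α + Pi.single i 1) - u α) / h

/-- **Existence and uniqueness of the discrete state vector (Corollary 4.2).**
Under the positivity assumption on some `Γ_{lα}` and connectedness of the grid graph,
there is exactly one grid function (normalized to vanish off `𝒜(Q_h)`) satisfying the
discrete variational identity for all grid test functions. -/
theorem discrete_state_exists_unique
    (n m : ℕ) (hn : n = 2 ∨ n = 3) (hm : 0 < m)
    (Q : Set (EuclideanSpace ℝ (Fin n))) (hQopen : IsOpen Q)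
    (hQbdd : Bornology.IsBounded Q)
    (h : ℝ) (hh : 0 < h)
    -- the index sets 𝒜(Q_h⁺), 𝒜(Q_h), 𝒜(S_h)
    (Aplus AQ AS : Finset (Fin n → ℤ))
    (hAplus : ∀ α, α ∈ Aplus ↔ (gridCell n h α ∩ Q).Nonempty)
    (Qh : Set (EuclideanSpace ℝ (Fin n))) (hQh : Qh = ⋃ α ∈ Aplus, gridCell n h α)
    (hAQ : ∀ α, α ∈ AQ ↔ gridCorner n h α ∈ Qh)
    (hAS : ∀ α, α ∈ AS ↔ gridCorner n h α ∈ frontier Qh)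
    -- the index sets 𝒜(Q_h^{(i)})
    (Ai : Fin n → Finset (Fin n → ℤ))
    (hAi : ∀ i α, α ∈ Ai i ↔ α ∈ AQ ∧ gridCorner n h (α + Pi.single i 1) ∈ Qh)
    -- electrodes: pairwise disjoint Borel subsets of ∂Q
    (E : Fin m → Set (EuclideanSpace ℝ (Fin n)))
    (hEsub : ∀ l, E l ⊆ frontier Q) (hEmeas : ∀ l, MeasurableSet (E l))
    (hEdisj : Pairwise (Function.onFun Disjoint E))
    -- Γ_{lα} = H^{n-1}(E_l ∩ C_h^α) and the index sets 𝒜(Ê_{lh})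
    (Γ : Fin m → (Fin n → ℤ) → ℝ)
    (hΓ : ∀ l α, Γ l α = (μH[(n : ℝ) - 1] (E l ∩ gridCell n h α)).toReal)
    (AE : Fin m → Finset (Fin n → ℤ))
    (hAE : ∀ l α, α ∈ AE l ↔ α ∈ AQ ∧ (E l ∩ gridCell n h α).Nonempty)
    -- contact impedances, voltages, conductivity values
    (Z : Fin m → ℝ) (hZ : ∀ l, 0 < Z l)
    (U : Fin m → ℝ)
    (σ : (Fin n → ℤ) → ℝ) (σ₀ : ℝ) (hσ₀ : 0 < σ₀) (hσ : ∀ α, σ₀ ≤ σ α)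
    -- structural assumptions
    (hSsub : ∀ i : Fin n, ∀ α ∈ Ai i, α ∉ Aplus → α ∈ AS)
    (hSfin : μH[(n : ℝ) - 1] (frontier Q) ≠ ⊤)
    (hΓsum : ∀ l, ∑ α ∈ AE l, Γ l α ≤ (μH[(n : ℝ) - 1] (frontier Q)).toReal)
    -- at least one Γ_{lα} with α ∈ 𝒜(Ê_{lh}) is positive
    (hΓpos : ∃ l, ∃ α ∈ AE l, 0 < Γ l α)
    -- the grid graph on 𝒜(Q_h), whose edges are the pairs {α, α+eᵢ} with
    -- α ∈ 𝒜(Q_h⁺) or α ∈ 𝒜(S_h) ∩ (𝒜(Q_h^{(i)}) ∖ 𝒜(Q_h⁺)), is connected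
    (hconn : ∀ α ∈ AQ, ∀ β ∈ AQ,
      Relation.ReflTransGen
        (fun γ δ => γ ∈ AQ ∧ δ ∈ AQ ∧ ∃ i : Fin n,
          (δ = γ + Pi.single i 1 ∧
            (γ ∈ Aplus ∨ (γ ∈ AS ∧ γ ∈ Ai i ∧ γ ∉ Aplus))) ∨
          (γ = δ + Pi.single i 1 ∧
            (δ ∈ Aplus ∨ (δ ∈ AS ∧ δ ∈ Ai i ∧ δ ∉ Aplus))))
        α β) :
    ∃! u : (Fin n → ℤ) → ℝ,
      (∀ α ∉ AQ, u α = 0) ∧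
      ∀ η : (Fin n → ℤ) → ℝ,
        h ^ n * ∑ α ∈ Aplus, σ α * ∑ i, gridFwdDiff n h u α i * gridFwdDiff n h η α i
          + ∑ l, (Z l)⁻¹ * ∑ α ∈ AE l, Γ l α * (u α * η α)
          + h ^ n * ∑ α ∈ AS, ∑ i,
              (if α ∈ Ai i ∧ α ∉ Aplus then (1 : ℝ) else 0)
                * (gridFwdDiff n h u α i * gridFwdDiff n h η α i)
        = ∑ l, U l / Z l * ∑ α ∈ AE l, Γ l α * η α := by
  classical
  have hcell_corner : ∀ α : Fin n → ℤ, gridCorner n h α ∈ gridCell n h α := by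
    intro α i
    constructor
    · exact le_rfl
    · show (α i : ℝ) * h ≤ ((α i : ℝ) + 1) * h
      nlinarith [hh.le]
  have hcell_succ : ∀ (α : Fin n → ℤ) (i : Fin n),
      gridCorner n h (α + Pi.single i 1) ∈ gridCell n h α := by
    intro α i j
    have hval : gridCorner n h (α + Pi.single i 1) j
        = ((α j + Pi.single (M := fun _ => ℤ) i 1 j : ℤ) : ℝ) * h := rfl
    rw [hval]
    by_cases hji : j = i
    · subst hji
      rw [Pi.single_eq_same]
      push_cast
      constructor <;> nlinarith [hh.le]
    · rw [Pi.single_eq_of_ne hji]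
      push_cast
      constructor <;> nlinarith [hh.le]
  have hcellmemAQ : ∀ α ∈ Aplus, ∀ γ : Fin n → ℤ,
      gridCorner n h γ ∈ gridCell n h α → γ ∈ AQ := by
    intro α hα γ hγ
    rw [hAQ, hQh]
    exact Set.mem_biUnion hα hγ
  have hAplusAQ : ∀ α ∈ Aplus, α ∈ AQ := fun α hα => hcellmemAQ α hα α (hcell_corner α)
  have hAplus_succ : ∀ α ∈ Aplus, ∀ i, α + Pi.single i 1 ∈ AQ :=
    fun α hα i => hcellmemAQ α hα _ (hcell_succ α i)
  have hQh_closed : IsClosed Qh := by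
    rw [hQh]
    apply Set.Finite.isClosed_biUnion (Aplus.finite_toSet)
    intro α _
    have : gridCell n h α = ⋂ i : Fin n,
        ({x : EuclideanSpace ℝ (Fin n) | (α i : ℝ) * h ≤ x i} ∩
          {x : EuclideanSpace ℝ (Fin n) | x i ≤ ((α i : ℝ) + 1) * h}) := by
      ext x
      simp only [gridCell, Set.mem_setOf_eq, Set.mem_iInter, Set.mem_inter_iff]
    rw [this]
    refine isClosed_iInter fun i => IsClosed.inter ?_ ?_
    · exact isClosed_le continuous_const (EuclideanSpace.proj i).continuous
    · exact isClosed_le (EuclideanSpace.proj i).continuous continuous_const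
  have hASAQ : ∀ α ∈ AS, α ∈ AQ := by
    intro α hα
    rw [hAQ]
    exact hQh_closed.frontier_subset ((hAS α).mp hα)
  have hAi_succ : ∀ (i : Fin n) (α), α ∈ Ai i → α + Pi.single i 1 ∈ AQ := by
    intro i α hα
    rw [hAQ]
    exact ((hAi i α).mp hα).2
  have hAEAQ : ∀ (l) (α), α ∈ AE l → α ∈ AQ := fun l α hα => ((hAE l α).mp hα).1
  refine aux_exists_unique AQ
    (fun u η =>
      h ^ n * ∑ α ∈ Aplus, σ α * ∑ i, gridFwdDiff n h u α i * gridFwdDiff n h η α i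
        + ∑ l, (Z l)⁻¹ * ∑ α ∈ AE l, Γ l α * (u α * η α)
        + h ^ n * ∑ α ∈ AS, ∑ i,
            (if α ∈ Ai i ∧ α ∉ Aplus then (1 : ℝ) else 0)
              * (gridFwdDiff n h u α i * gridFwdDiff n h η α i))
    (fun η => ∑ l, U l / Z l * ∑ α ∈ AE l, Γ l α * η α)
    ?_ ?_ ?_ ?_ ?_ ?_ ?_ ?_
  · intro u v
    congr 1
    · congr 1
      · congr 1
        refine Finset.sum_congr rfl fun α _ => ?_
        congr 1
        exact Finset.sum_congr rfl fun i _ => by ring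
      · refine Finset.sum_congr rfl fun l _ => ?_
        congr 1
        exact Finset.sum_congr rfl fun α _ => by ring
    · congr 1
      refine Finset.sum_congr rfl fun α _ => ?_
      exact Finset.sum_congr rfl fun i _ => by ring
  · intro u x y
    simp only [gridFwdDiff, Pi.add_apply, add_sub_add_comm, add_div, mul_add,
      Finset.sum_add_distrib]
    ring
  · intro u c x
    simp only [gridFwdDiff, Pi.smul_apply, smul_eq_mul, ← mul_sub, mul_div_assoc,
      mul_left_comm _ c, ← Finset.mul_sum]
    ring
  · intro u x y hxy
    have hDe : ∀ (z z' : (Fin n → ℤ) → ℝ) (α : Fin n → ℤ) (i : Fin n),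
        z α = z' α → z (α + Pi.single i 1) = z' (α + Pi.single i 1) →
        gridFwdDiff n h z α i = gridFwdDiff n h z' α i := by
      intro z z' α i h1 h2
      simp only [gridFwdDiff, h1, h2]
    congr 1
    · congr 1
      · congr 1
        refine Finset.sum_congr rfl fun α hα => ?_
        congr 1
        refine Finset.sum_congr rfl fun i _ => ?_
        rw [hDe x y α i (hxy α (hAplusAQ α hα)) (hxy _ (hAplus_succ α hα i))]
      · refine Finset.sum_congr rfl fun l _ => ?_
        congr 1
        refine Finset.sum_congr rfl fun α hα => ?_
        rw [hxy α (hAEAQ l α hα)]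
    · congr 1
      refine Finset.sum_congr rfl fun α hα => ?_
      refine Finset.sum_congr rfl fun i _ => ?_
      by_cases hc : α ∈ Ai i ∧ α ∉ Aplus
      · rw [if_pos hc, hDe x y α i (hxy α (hASAQ α hα)) (hxy _ (hAi_succ i α hc.1))]
      · rw [if_neg hc, zero_mul, zero_mul]
  · intro x y hxy
    refine Finset.sum_congr rfl fun l _ => ?_
    congr 1
    refine Finset.sum_congr rfl fun α hα => ?_
    rw [hxy α (hAEAQ l α hα)]
  · intro x y
    simp only [Pi.add_apply, mul_add, Finset.sum_add_distrib]
  · intro c x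
    simp only [Pi.smul_apply, smul_eq_mul, mul_left_comm _ c, ← Finset.mul_sum]
  · intro u hsupp h0
    have hhn : (0:ℝ) < h ^ n := pow_pos hh n
    have hΓnn : ∀ l α, 0 ≤ Γ l α := by
      intro l α; rw [hΓ]; exact ENNReal.toReal_nonneg
    have hσpos : ∀ α, (0:ℝ) < σ α := fun α => lt_of_lt_of_le hσ₀ (hσ α)
    have hS1nn : 0 ≤ ∑ α ∈ Aplus, σ α * ∑ i, gridFwdDiff n h u α i * gridFwdDiff n h u α i :=
      Finset.sum_nonneg fun α _ => mul_nonneg (hσpos α).le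
        (Finset.sum_nonneg fun i _ => mul_self_nonneg _)
    have hS2nn : 0 ≤ ∑ l, (Z l)⁻¹ * ∑ α ∈ AE l, Γ l α * (u α * u α) :=
      Finset.sum_nonneg fun l _ => mul_nonneg (inv_nonneg.mpr (hZ l).le)
        (Finset.sum_nonneg fun α _ => mul_nonneg (hΓnn l α) (mul_self_nonneg _))
    have hS3nn : 0 ≤ ∑ α ∈ AS, ∑ i,
        (if α ∈ Ai i ∧ α ∉ Aplus then (1 : ℝ) else 0)
          * (gridFwdDiff n h u α i * gridFwdDiff n h u α i) :=
      Finset.sum_nonneg fun α _ => Finset.sum_nonneg fun i _ =>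
        mul_nonneg (by split <;> norm_num) (mul_self_nonneg _)
    have e1 : ∑ α ∈ Aplus, σ α * ∑ i, gridFwdDiff n h u α i * gridFwdDiff n h u α i = 0 := by
      nlinarith [mul_nonneg hhn.le hS1nn, mul_nonneg hhn.le hS3nn]
    have e2 : ∑ l, (Z l)⁻¹ * ∑ α ∈ AE l, Γ l α * (u α * u α) = 0 := by
      nlinarith [mul_nonneg hhn.le hS1nn, mul_nonneg hhn.le hS3nn]
    have e3 : ∑ α ∈ AS, ∑ i,
        (if α ∈ Ai i ∧ α ∉ Aplus then (1 : ℝ) else 0)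
          * (gridFwdDiff n h u α i * gridFwdDiff n h u α i) = 0 := by
      nlinarith [mul_nonneg hhn.le hS1nn, mul_nonneg hhn.le hS3nn]
    have hDu1 : ∀ α ∈ Aplus, ∀ i, gridFwdDiff n h u α i = 0 := by
      intro α hα i
      have t1 := (Finset.sum_eq_zero_iff_of_nonneg fun α _ => mul_nonneg (hσpos α).le
        (Finset.sum_nonneg fun i _ => mul_self_nonneg _)).mp e1 α hα
      have t2 : ∑ i, gridFwdDiff n h u α i * gridFwdDiff n h u α i = 0 :=
        (mul_eq_zero.mp t1).resolve_left (hσpos α).ne'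
      have t3 := (Finset.sum_eq_zero_iff_of_nonneg fun i _ => mul_self_nonneg _).mp t2 i
        (Finset.mem_univ i)
      exact mul_self_eq_zero.mp t3
    have hDu3 : ∀ α ∈ AS, ∀ i, α ∈ Ai i → α ∉ Aplus → gridFwdDiff n h u α i = 0 := by
      intro α hα i hai hnp
      have t1 := (Finset.sum_eq_zero_iff_of_nonneg fun α _ => Finset.sum_nonneg fun i _ =>
        mul_nonneg (by split <;> norm_num) (mul_self_nonneg _)).mp e3 α hα
      have t2 := (Finset.sum_eq_zero_iff_of_nonneg fun i _ =>
        mul_nonneg (by split <;> norm_num) (mul_self_nonneg _)).mp t1 i (Finset.mem_univ i)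
      rw [if_pos ⟨hai, hnp⟩, one_mul] at t2
      exact mul_self_eq_zero.mp t2
    obtain ⟨l₀, α₀, hα₀, hΓ₀⟩ := hΓpos
    have hu₀ : u α₀ = 0 := by
      have t1 := (Finset.sum_eq_zero_iff_of_nonneg fun l _ =>
        mul_nonneg (inv_nonneg.mpr (hZ l).le)
          (Finset.sum_nonneg fun α _ => mul_nonneg (hΓnn l α) (mul_self_nonneg _))).mp e2 l₀
        (Finset.mem_univ l₀)
      have t2 : ∑ α ∈ AE l₀, Γ l₀ α * (u α * u α) = 0 :=
        (mul_eq_zero.mp t1).resolve_left (inv_ne_zero (hZ l₀).ne')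
      have t3 := (Finset.sum_eq_zero_iff_of_nonneg fun α _ =>
        mul_nonneg (hΓnn l₀ α) (mul_self_nonneg _)).mp t2 α₀ hα₀
      have t4 : u α₀ * u α₀ = 0 := (mul_eq_zero.mp t3).resolve_left hΓ₀.ne'
      exact mul_self_eq_zero.mp t4
    have hedge : ∀ γ δ : Fin n → ℤ,
        (γ ∈ AQ ∧ δ ∈ AQ ∧ ∃ i : Fin n,
          (δ = γ + Pi.single i 1 ∧
            (γ ∈ Aplus ∨ (γ ∈ AS ∧ γ ∈ Ai i ∧ γ ∉ Aplus))) ∨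
          (γ = δ + Pi.single i 1 ∧
            (δ ∈ Aplus ∨ (δ ∈ AS ∧ δ ∈ Ai i ∧ δ ∉ Aplus)))) → u γ = u δ := by
      rintro γ δ ⟨-, -, i, ⟨rfl, hor⟩ | ⟨rfl, hor⟩⟩
      · have hd : gridFwdDiff n h u γ i = 0 := by
          rcases hor with hp | ⟨hs, hai, hnp⟩
          · exact hDu1 γ hp i
          · exact hDu3 γ hs i hai hnp
        simp only [gridFwdDiff, div_eq_zero_iff] at hd
        rcases hd with hd | hd
        · exact (sub_eq_zero.mp hd).symm
        · exact absurd hd hh.ne'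
      · have hd : gridFwdDiff n h u δ i = 0 := by
          rcases hor with hp | ⟨hs, hai, hnp⟩
          · exact hDu1 δ hp i
          · exact hDu3 δ hs i hai hnp
        simp only [gridFwdDiff, div_eq_zero_iff] at hd
        rcases hd with hd | hd
        · exact sub_eq_zero.mp hd
        · exact absurd hd hh.ne'
    have hconst : ∀ γ δ : Fin n → ℤ,
        Relation.ReflTransGen
          (fun γ δ => γ ∈ AQ ∧ δ ∈ AQ ∧ ∃ i : Fin n,
            (δ = γ + Pi.single i 1 ∧
              (γ ∈ Aplus ∨ (γ ∈ AS ∧ γ ∈ Ai i ∧ γ ∉ Aplus))) ∨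
            (γ = δ + Pi.single i 1 ∧
              (δ ∈ Aplus ∨ (δ ∈ AS ∧ δ ∈ Ai i ∧ δ ∉ Aplus)))) γ δ → u γ = u δ := by
      intro γ δ p
      induction p with
      | refl => rfl
      | tail _ hstep ih => exact ih.trans (hedge _ _ hstep)
    funext β
    show u β = 0
    by_cases hβ : β ∈ AQ
    · have path := hconn α₀ (hAEAQ l₀ α₀ hα₀) β hβ
      rw [← hconst α₀ β path]
      exact hu₀
    · exact hsupp β hβ
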